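/- For every parameter vector θ of the original network and every input x ∈ ℝ^n, the enlarged network obtained by the β embedding computes exactly the same input–output map: f̂_r(x, β_{ζs}(θ)) = f_r(x, θ) for all r = 1,…,m and arbitrary ζ_k ∈ ℝ, s_{jk} ∈ ℝ. -/

import Mathlib

/-- Parameters of a fully connected feedforward network: `w ℓ j i` is the weight from
unit `i` of layer `ℓ-1` to unit `j` of layer `ℓ`, and `b ℓ j` is the bias of unit `j`
of layer `ℓ`.  Layers are numbered `1, …, L` (layer `0` is the input); units within a
layer are numbered from `0`, so layer `ℓ` consists of the units `0, …, H ℓ - 1`. -/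
structure NNParams where
  w : ℕ → ℕ → ℕ → ℝ
  b : ℕ → ℕ → ℝ

/-- `layerOut g H θ x ℓ i` : the output of unit `i` of layer `ℓ` on input `x`
(`layerOut g H θ x 0 = x`, and for `ℓ ≥ 1` it is `g` applied to the pre-activation). -/
noncomputable def layerOut (g : ℝ → ℝ) (H : ℕ → ℕ) (θ : NNParams) (x : ℕ → ℝ) :
    ℕ → ℕ → ℝ
  | 0, i => x i
  | ℓ + 1, i =>
      g (∑ j ∈ Finset.range (H ℓ), θ.w (ℓ + 1) i j * layerOut g H θ x ℓ j + θ.b (ℓ + 1) i)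

/-- Pre-activation `a_j^ℓ(x, θ)` of unit `j` of layer `ℓ ≥ 1`:
`a_j^ℓ = ∑_{i < H (ℓ-1)} w_{ji}^ℓ · (output of unit i of layer ℓ-1) + σ_j^ℓ`.
The outputs of the last layer `L` are `f_r(x,θ) = preact g H θ x L r` (linear output units). -/
noncomputable def preact (g : ℝ → ℝ) (H : ℕ → ℕ) (θ : NNParams) (x : ℕ → ℝ)
    (ℓ j : ℕ) : ℝ :=
  ∑ i ∈ Finset.range (H (ℓ - 1)), θ.w ℓ j i * layerOut g H θ x (ℓ - 1) i + θ.b ℓ j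

/-- Empirical risk `R_emp(θ) = (1/P) ∑_{p<P} ℒ(y^p, f(x^p, θ))`, where the network has
`L` layers with layer sizes given by `H`, the training inputs are `X p` and the labels
`Y p`, and `m` is the output dimension seen by the loss. -/
noncomputable def Remp (g : ℝ → ℝ) (H : ℕ → ℕ) (L P : ℕ) {m : ℕ}
    (X Y : ℕ → ℕ → ℝ) (loss : (ℕ → ℝ) → (Fin m → ℝ) → ℝ) (θ : NNParams) : ℝ :=
  (1 / (P : ℝ)) * ∑ p ∈ Finset.range P,
    loss (Y p) (fun r => preact g H θ (X p) L r)

/-- Layer sizes of the network enlarged by adding `K` new neurons to layer `l`. -/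
def enlargeH (H : ℕ → ℕ) (l K : ℕ) : ℕ → ℕ :=
  fun ℓ => if ℓ = l then H l + K else H ℓ

/-- The embedding `α_{ζv}` : copy all parameters, give the `k`-th new neuron of layer `l`
(`k = 0, …, K-1`, i.e. unit `H l + k`) the bias `ζ k` and incoming weights `v k`, and
set all weights from the new neurons to layer `l+1` to zero. -/
noncomputable def alphaEmb (H : ℕ → ℕ) (l K : ℕ) (ζ : ℕ → ℝ) (v : ℕ → ℕ → ℝ)
    (θ : NNParams) : NNParams where
  w := fun ℓ j i =>
    if ℓ = l ∧ H l ≤ j then v (j - H l) i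
    else if ℓ = l + 1 ∧ H l ≤ i then 0
    else θ.w ℓ j i
  b := fun ℓ j => if ℓ = l ∧ H l ≤ j then ζ (j - H l) else θ.b ℓ j

/-- The embedding `β_{ζs}` : copy all parameters except the biases of layer `l+1`, give
the `k`-th new neuron of layer `l` the bias `ζ k` and zero incoming weights, set the
outgoing weight from the `k`-th new neuron to unit `j` of layer `l+1` to `s j k`, and
replace the bias of unit `j` of layer `l+1` by `σ_j - ∑_{k<K} s j k · g (ζ k)`. -/
noncomputable def betaEmb (g : ℝ → ℝ) (H : ℕ → ℕ) (l K : ℕ) (ζ : ℕ → ℝ)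
    (s : ℕ → ℕ → ℝ) (θ : NNParams) : NNParams where
  w := fun ℓ j i =>
    if ℓ = l ∧ H l ≤ j then 0
    else if ℓ = l + 1 ∧ H l ≤ i then s j (i - H l)
    else θ.w ℓ j i
  b := fun ℓ j =>
    if ℓ = l ∧ H l ≤ j then ζ (j - H l)
    else if ℓ = l + 1 then θ.b (l + 1) j - ∑ k ∈ Finset.range K, s j k * g (ζ k)
    else θ.b ℓ j

/-- The embedding `γ_λ` : duplicate unit `h` of layer `l` into each of the `K` new
neurons (same bias and incoming weights as unit `h`), and split the outgoing weights:
unit `h` keeps `lam 0 · w_{jh}^{l+1}` and the `k`-th new neuron (`k = 0, …, K-1`,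
i.e. unit `H l + k`, corresponding to `λ_{k+1}` of the paper) gets
`lam (k+1) · w_{jh}^{l+1}`; all other parameters are copied. -/
noncomputable def gammaEmb (H : ℕ → ℕ) (l K : ℕ) (h : ℕ) (lam : ℕ → ℝ)
    (θ : NNParams) : NNParams where
  w := fun ℓ j i =>
    if ℓ = l ∧ H l ≤ j then θ.w l h i
    else if ℓ = l + 1 ∧ i = h then lam 0 * θ.w (l + 1) j h
    else if ℓ = l + 1 ∧ H l ≤ i then lam (i - H l + 1) * θ.w (l + 1) j h
    else θ.w ℓ j i
  b := fun ℓ j => if ℓ = l ∧ H l ≤ j then θ.b l h else θ.b ℓ j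

/-- `θ` with the single weight `w ℓ j i` replaced by `t`. -/
noncomputable def updW (θ : NNParams) (ℓ j i : ℕ) (t : ℝ) : NNParams :=
  ⟨fun ℓ' j' i' => if ℓ' = ℓ ∧ j' = j ∧ i' = i then t else θ.w ℓ' j' i', θ.b⟩

/-- `θ` with the single bias `b ℓ j` replaced by `t`. -/
noncomputable def updB (θ : NNParams) (ℓ j : ℕ) (t : ℝ) : NNParams :=
  ⟨θ.w, fun ℓ' j' => if ℓ' = ℓ ∧ j' = j then t else θ.b ℓ' j'⟩

/-- `∇ R_emp(θ) = 0` : every partial derivative of the empirical risk with respect to an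
actual network parameter (a weight `w ℓ j i` or a bias `b ℓ j`, `1 ≤ ℓ ≤ L`, `j < H ℓ`,
`i < H (ℓ-1)`) vanishes at `θ`. -/
def IsCritical (g : ℝ → ℝ) (H : ℕ → ℕ) (L P : ℕ) {m : ℕ}
    (X Y : ℕ → ℕ → ℝ) (loss : (ℕ → ℝ) → (Fin m → ℝ) → ℝ) (θ : NNParams) : Prop :=
  (∀ ℓ j i, 1 ≤ ℓ → ℓ ≤ L → j < H ℓ → i < H (ℓ - 1) →
      deriv (fun t => Remp g H L P X Y loss (updW θ ℓ j i t)) (θ.w ℓ j i) = 0) ∧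
  ∀ ℓ j, 1 ≤ ℓ → ℓ ≤ L → j < H ℓ →
      deriv (fun t => Remp g H L P X Y loss (updB θ ℓ j t)) (θ.b ℓ j) = 0

/-- Layer sizes after enlarging layer `p.1` by `p.2` neurons for each pair in the list. -/
def multiEnlargeH : (ℕ → ℕ) → List (ℕ × ℕ) → (ℕ → ℕ)
  | H, [] => H
  | H, (l, K) :: rest => multiEnlargeH (enlargeH H l K) rest

/-- Composition of `α` embeddings: for each `(l, K)` in the list (in order), add `K` new
neurons to layer `l` via `α` with biases `ζ l` and incoming weights `v l`. -/
noncomputable def multiAlpha (ζ : ℕ → ℕ → ℝ) (v : ℕ → ℕ → ℕ → ℝ) :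
    (ℕ → ℕ) → List (ℕ × ℕ) → NNParams → NNParams
  | _, [], θ => θ
  | H, (l, K) :: rest, θ =>
      multiAlpha ζ v (enlargeH H l K) rest (alphaEmb H l K (ζ l) (v l) θ)

noncomputable def multiBeta (g : ℝ → ℝ) (ζ : ℕ → ℕ → ℝ) (s : ℕ → ℕ → ℕ → ℝ) :
    (ℕ → ℕ) → List (ℕ × ℕ) → NNParams → NNParams
  | _, [], θ => θ
  | H, (l, K) :: rest, θ =>
      multiBeta g ζ s (enlargeH H l K) rest (betaEmb g H l K (ζ l) (s l) θ)

noncomputable def multiGamma (hsel : ℕ → ℕ) (lam : ℕ → ℕ → ℝ) :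
    (ℕ → ℕ) → List (ℕ × ℕ) → NNParams → NNParams
  | _, [], θ => θ
  | H, (l, K) :: rest, θ =>
      multiGamma hsel lam (enlargeH H l K) rest (gammaEmb H l K (hsel l) (lam l) θ)

/-- A single enlargement step: either a `β` embedding with zero outgoing weights, or a
`γ` embedding. -/
inductive EmbStep where
  | beta (l K : ℕ) (ζ : ℕ → ℝ)
  | gamma (l K : ℕ) (h : ℕ) (lam : ℕ → ℝ)

def EmbStep.layer : EmbStep → ℕ
  | .beta l _ _ => l
  | .gamma l _ _ _ => l

def EmbStep.count : EmbStep → ℕ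
  | .beta _ K _ => K
  | .gamma _ K _ _ => K

noncomputable def EmbStep.apply (g : ℝ → ℝ) (H : ℕ → ℕ) (θ : NNParams) : EmbStep → NNParams
  | .beta l K ζ => betaEmb g H l K ζ (fun _ _ => 0) θ
  | .gamma l K h lam => gammaEmb H l K h lam θ

def EmbStep.OK (H : ℕ → ℕ) (L : ℕ) : EmbStep → Prop
  | .beta l _ _ => 1 ≤ l ∧ l + 1 ≤ L
  | .gamma l K h lam => 1 ≤ l ∧ l + 1 ≤ L ∧ h < H l ∧ ∑ i ∈ Finset.range (K + 1), lam i = 1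

noncomputable def applySteps (g : ℝ → ℝ) : (ℕ → ℕ) → List EmbStep → NNParams → NNParams
  | _, [], θ => θ
  | H, st :: rest, θ =>
      applySteps g (enlargeH H st.layer st.count) rest (EmbStep.apply g H θ st)

def stepsH : (ℕ → ℕ) → List EmbStep → (ℕ → ℕ)
  | H, [] => H
  | H, st :: rest => stepsH (enlargeH H st.layer st.count) rest

/-- For every parameter vector `θ` and every input `x`, the network
enlarged by the `β` embedding computes exactly the same input–output map:
`f̂_r(x, β_{ζs}(θ)) = f_r(x, θ)` for all outputs `r < m = H L`. -/
theorem betaEmb_preserves_output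
    (g : ℝ → ℝ) (H : ℕ → ℕ) (L : ℕ)
    (l : ℕ) (hl1 : 1 ≤ l) (hlL : l + 1 ≤ L) (K : ℕ)
    (ζ : ℕ → ℝ) (s : ℕ → ℕ → ℝ) (θ : NNParams) (x : ℕ → ℝ) :
    ∀ r, r < H L →
      preact g (enlargeH H l K) (betaEmb g H l K ζ s θ) x L r = preact g H θ x L r := by
  set H' := enlargeH H l K with hH'
  set θ' := betaEmb g H l K ζ s θ with hθ'
  -- layers strictly below l are unchanged
  have hA1 : ∀ ℓ, ℓ < l → ∀ i, layerOut g H' θ' x ℓ i = layerOut g H θ x ℓ i := by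
    intro ℓ
    induction ℓ with
    | zero => intro _ i; rfl
    | succ n ih =>
      intro hlt i
      have hn : n < l := Nat.lt_of_succ_lt hlt
      have hne : n ≠ l := Nat.ne_of_lt hn
      have hne1 : n + 1 ≠ l := Nat.ne_of_lt hlt
      have hne2 : n + 1 ≠ l + 1 := by omega
      simp only [layerOut]
      have hHn : H' n = H n := by simp [hH', enlargeH, hne]
      rw [hHn]
      apply congrArg g
      congr 1
      · apply Finset.sum_congr rfl
        intro j _
        rw [ih hn j]
        simp [hθ', betaEmb, hne1, hne2, hne]
      · simp [hθ', betaEmb, hne1, hne2, hne]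
  -- old units of layer l are unchanged
  have hA2 : ∀ i, i < H l → layerOut g H' θ' x l i = layerOut g H θ x l i := by
    intro i hi
    obtain ⟨n, rfl⟩ := Nat.exists_eq_add_of_le hl1
    simp only [Nat.add_comm 1 n] at *
    have hnl : n < n + 1 := Nat.lt_succ_self n
    simp only [layerOut]
    have hHn : H' n = H n := by simp [hH', enlargeH, Nat.ne_of_lt hnl]
    rw [hHn]
    apply congrArg g
    congr 1
    · apply Finset.sum_congr rfl
      intro j _
      rw [hA1 n hnl j]
      simp [hθ', betaEmb, Nat.not_le.mpr hi]
    · simp [hθ', betaEmb, Nat.not_le.mpr hi]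
  -- new units of layer l output g (ζ k)
  have hA3 : ∀ i, H l ≤ i → layerOut g H' θ' x l i = g (ζ (i - H l)) := by
    intro i hi
    obtain ⟨n, rfl⟩ := Nat.exists_eq_add_of_le hl1
    simp only [Nat.add_comm 1 n] at *
    simp only [layerOut]
    congr 1
    have hw : ∀ j ∈ Finset.range (H' n), θ'.w (n + 1) (i) j * layerOut g H' θ' x n j = 0 := by
      intro j _
      simp [hθ', betaEmb, hi]
    rw [Finset.sum_congr rfl hw]
    simp [hθ', betaEmb, hi]
  -- the pre-activation of layer l+1 agrees
  have hPre : ∀ j,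
      (∑ i ∈ Finset.range (H' l), θ'.w (l + 1) j i * layerOut g H' θ' x l i + θ'.b (l + 1) j)
        = ∑ i ∈ Finset.range (H l), θ.w (l + 1) j i * layerOut g H θ x l i + θ.b (l + 1) j := by
    intro j
    have hHl : H' l = H l + K := by simp [hH', enlargeH]
    rw [hHl, Finset.sum_range_add]
    have h1 : ∀ i ∈ Finset.range (H l),
        θ'.w (l + 1) j i * layerOut g H' θ' x l i
          = θ.w (l + 1) j i * layerOut g H θ x l i := by
      intro i hi
      rw [Finset.mem_range] at hi
      rw [hA2 i hi]
      simp [hθ', betaEmb, Nat.not_le.mpr hi, Nat.ne_of_gt (Nat.lt_succ_self l)]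
    have h2 : ∀ k ∈ Finset.range K,
        θ'.w (l + 1) j (H l + k) * layerOut g H' θ' x l (H l + k)
          = s j k * g (ζ k) := by
      intro k _
      rw [hA3 (H l + k) (Nat.le_add_right _ _)]
      simp [hθ', betaEmb, Nat.ne_of_gt (Nat.lt_succ_self l)]
    rw [Finset.sum_congr rfl h1, Finset.sum_congr rfl h2]
    have hb : θ'.b (l + 1) j = θ.b (l + 1) j - ∑ k ∈ Finset.range K, s j k * g (ζ k) := by
      simp [hθ', betaEmb, Nat.ne_of_gt (Nat.lt_succ_self l)]
    rw [hb]
    ring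
  -- all layers from l+1 on agree
  have hC : ∀ ℓ, l + 1 ≤ ℓ → ∀ i, layerOut g H' θ' x ℓ i = layerOut g H θ x ℓ i := by
    intro ℓ
    induction ℓ with
    | zero => omega
    | succ n ih =>
      intro hle i
      rcases Nat.lt_or_ge l n with hln | hln
      · -- n ≥ l + 1
        have hne : n ≠ l := by omega
        have hne1 : n + 1 ≠ l := by omega
        have hne2 : n + 1 ≠ l + 1 := by omega
        simp only [layerOut]
        have hHn : H' n = H n := by simp [hH', enlargeH, hne]
        rw [hHn]
        apply congrArg g
        congr 1
        · apply Finset.sum_congr rfl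
          intro j _
          rw [ih (by omega) j]
          simp [hθ', betaEmb, hne1, hne2, hne]
        · simp [hθ', betaEmb, hne1, hne2, hne]
      · -- n = l
        have hnl : n = l := by omega
        subst hnl
        simp only [layerOut]
        exact congrArg g (hPre i)
  -- conclude for the output pre-activations of layer L
  intro r _
  obtain ⟨M, rfl⟩ := Nat.exists_eq_add_of_le hlL
  simp only [preact]
  have hsub : l + 1 + M - 1 = l + M := by omega
  rw [hsub]
  rcases Nat.eq_zero_or_pos M with hM | hM
  · subst hM
    simpa using hPre r
  · have hlt : l < l + M := by omega
    have hne : l + M ≠ l := by omega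
    have hne1 : l + 1 + M ≠ l := by omega
    have hne2 : l + 1 + M ≠ l + 1 := by omega
    have hHn : H' (l + M) = H (l + M) := by simp [hH', enlargeH, hne, hM.ne']
    rw [hHn]
    congr 1
    · apply Finset.sum_congr rfl
      intro j _
      rw [hC (l + M) (by omega) j]
      simp [hθ', betaEmb, hne1, hne2, hM.ne']
    · simp [hθ', betaEmb, hne1, hne2, hM.ne']
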